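/- Let λ be a nonzero real number and p, q, r, v₁, v₂, v : ℝ → ℝ smooth functions with 2r(x) − λ ≠ 0 for all x. Set S := [[p,q],[r,−p]] and V := [[v₁, v₂],[v, −v₁]], and assume −λV′ + [V, S − λA] = 0 on ℝ. Then v₁ = (−λv′ + 2vp)/(2r − λ) and v₂ = 4·(λ²r′v′ − 2λr′pv)/(2r − λ)³ + 2·(−λ²v′′ + 2λpv′ + 2λvp′)/(2r − λ)² + v(2q − λ)/(2r − λ), identically on ℝ. -/

import Mathlib

open Matrix

/-- The constant matrix `A = (1/2)·[[0,1],[1,0]]`. -/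
noncomputable def A : Matrix (Fin 2) (Fin 2) ℝ := (1/2 : ℝ) • !![0, 1; 1, 0]

/-- Entrywise derivative of a matrix-valued function on `ℝ`. -/
noncomputable def mderiv (f : ℝ → Matrix (Fin 2) (Fin 2) ℝ) (x : ℝ) :
    Matrix (Fin 2) (Fin 2) ℝ :=
  Matrix.of fun i j => deriv (fun t => f t i j) x

theorem v₁_v₂_in_terms_of_v (lam : ℝ) (hlam : lam ≠ 0)
    (p q r v₁ v₂ v : ℝ → ℝ)
    (hp : ContDiff ℝ (⊤ : ℕ∞) p) (hq : ContDiff ℝ (⊤ : ℕ∞) q)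
    (hr : ContDiff ℝ (⊤ : ℕ∞) r) (hv₁ : ContDiff ℝ (⊤ : ℕ∞) v₁)
    (hv₂ : ContDiff ℝ (⊤ : ℕ∞) v₂) (hv : ContDiff ℝ (⊤ : ℕ∞) v)
    (hden : ∀ x, 2 * r x - lam ≠ 0)
    (S V : ℝ → Matrix (Fin 2) (Fin 2) ℝ)
    (hS : S = fun x => !![p x, q x; r x, -p x])
    (hV : V = fun x => !![v₁ x, v₂ x; v x, -v₁ x])
    (hLax : ∀ x : ℝ,
      (-lam) • mderiv V x + (V x * (S x - lam • A) - (S x - lam • A) * V x) = 0) :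
    ∀ x : ℝ,
      v₁ x = (-lam * deriv v x + 2 * v x * p x) / (2 * r x - lam) ∧
      v₂ x = 4 * (lam ^ 2 * deriv r x * deriv v x - 2 * lam * deriv r x * p x * v x)
                / (2 * r x - lam) ^ 3
           + 2 * (-lam ^ 2 * deriv (deriv v) x + 2 * lam * p x * deriv v x
                  + 2 * lam * v x * deriv p x) / (2 * r x - lam) ^ 2
           + v x * (2 * q x - lam) / (2 * r x - lam) := by
  subst hS hV
  -- scalar equations from the Lax equation
  have E11 : ∀ t : ℝ, -(lam * deriv v₁ t)
      + (v₁ t * p t + v₂ t * (r t - lam * 2⁻¹) - (p t * v₁ t + (q t - lam * 2⁻¹) * v t)) = 0 := by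
    intro t
    have h := congrFun (congrFun (hLax t) 0) 0
    simpa [mderiv, A, Matrix.mul_apply, Fin.sum_univ_two] using h
  have E21 : ∀ t : ℝ, -(lam * deriv v t)
      + (v t * p t + -(v₁ t * (r t - lam * 2⁻¹)) - ((r t - lam * 2⁻¹) * v₁ t + -(p t * v t))) = 0 := by
    intro t
    have h := congrFun (congrFun (hLax t) 1) 0
    simpa [mderiv, A, Matrix.mul_apply, Fin.sum_univ_two] using h
  -- differentiability
  have hdv : Differentiable ℝ (deriv v) := ((contDiff_infty_iff_deriv.mp hv).2).differentiable (by simp)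
  intro x
  have hd := hden x
  -- part 1
  have hE21x := E21 x
  have hpart1 : v₁ x = (-lam * deriv v x + 2 * v x * p x) / (2 * r x - lam) := by
    field_simp
    linarith [E21 x]
  refine ⟨hpart1, ?_⟩
  -- derivative of the product identity
  have hfun : (fun t => v₁ t * (2 * r t - lam)) = (fun t => -lam * deriv v t + 2 * p t * v t) := by
    funext t
    linear_combination -(E21 t)
  have hL : HasDerivAt (fun t => v₁ t * (2 * r t - lam))
      (deriv v₁ x * (2 * r x - lam) + v₁ x * (2 * deriv r x)) x := by
    exact ((hv₁.differentiable (by simp) x).hasDerivAt).mul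
      ((((hr.differentiable (by simp) x).hasDerivAt).const_mul 2).sub_const lam)
  have hR : HasDerivAt (fun t => -lam * deriv v t + 2 * p t * v t)
      (-lam * deriv (deriv v) x + (2 * deriv p x * v x + 2 * p x * deriv v x)) x := by
    have h1 : HasDerivAt (fun t => -lam * deriv v t) (-lam * deriv (deriv v) x) x :=
      ((hdv x).hasDerivAt).const_mul (-lam)
    have h2 : HasDerivAt (fun t => 2 * p t * v t)
        (2 * deriv p x * v x + 2 * p x * deriv v x) x := by
      have := (((hp.differentiable (by simp) x).hasDerivAt).const_mul 2).mul
        ((hv.differentiable (by simp) x).hasDerivAt)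
      exact this
    exact h1.add h2
  have hder : deriv v₁ x * (2 * r x - lam) + v₁ x * (2 * deriv r x)
      = -lam * deriv (deriv v) x + (2 * deriv p x * v x + 2 * p x * deriv v x) := by
    rw [hfun] at hL
    exact hL.unique hR
  have hE11' : v₂ x * (2 * r x - lam) = 2 * lam * deriv v₁ x + v x * (2 * q x - lam) := by
    linear_combination 2 * E11 x
  have hE21' : v₁ x * (2 * r x - lam) = -lam * deriv v x + 2 * p x * v x := by
    linear_combination -(E21 x)
  have key : v₂ x * (2 * r x - lam) ^ 3
      = 4 * (lam ^ 2 * deriv r x * deriv v x - 2 * lam * deriv r x * p x * v x)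
        + 2 * (-lam ^ 2 * deriv (deriv v) x + 2 * lam * p x * deriv v x
            + 2 * lam * v x * deriv p x) * (2 * r x - lam)
        + v x * (2 * q x - lam) * (2 * r x - lam) ^ 2 := by
    linear_combination (2 * r x - lam) ^ 2 * hE11' + 2 * lam * (2 * r x - lam) * hder
      - 4 * lam * deriv r x * hE21'
  field_simp
  linear_combination key
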